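/- Let 𝔽 be a field of characteristic zero, f ∈ 𝔽[x_1,…,x_n], a ∈ 𝔽^n, α ∈ ℕ^n, and k, ℓ ∈ ℕ^+. Let e_i ∈ ℕ^n denote the i-th unit vector. Then: (1) D_{a,α}^k(f) = Σ_{j_1=1}^n ⋯ Σ_{j_k=1}^n a^{e_{j_1}+⋯+e_{j_k}} ∂^{e_{j_1}+⋯+e_{j_k}}( [x^{α+e_{j_1}+⋯+e_{j_k}}](f) · x^{α+e_{j_1}+⋯+e_{j_k}} ); and (2) D_{a,α}^{k+ℓ}(f) = Σ_{|β|=ℓ} (ℓ choose β) a^β ∂^β( D_{a,α+β}^k(f) ). -/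

import Mathlib

open MvPolynomial

noncomputable section

variable {F : Type*} [Field F] [CharZero F] {n : ℕ}

/-- `∂^β = ∂_{x_1}^{β_1} ⋯ ∂_{x_n}^{β_n}` as an `F`-linear endomorphism of `F[x]`. -/
def pdPow (β : Fin n →₀ ℕ) : Module.End F (MvPolynomial (Fin n) F) :=
  (((List.finRange n).map fun i =>
    (((pderiv i).toLinearMap : Module.End F (MvPolynomial (Fin n) F)) ^ (β i)))).prod

/-- `D_{a,α}^k(f) = ∑_{|β|=k} (k choose β) a^β ∂^β ([x^{α+β}](f) · x^{α+β})`. -/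
def Dk (a : Fin n → F) (α : Fin n →₀ ℕ) (k : ℕ) (f : MvPolynomial (Fin n) F) :
    MvPolynomial (Fin n) F :=
  ∑ β ∈ Finset.Nat.antidiagonalTuple n k,
    ((Nat.multinomial Finset.univ β : F) * ∏ i, a i ^ β i) •
      pdPow (Finsupp.equivFunOnFinite.symm β)
        (monomial (α + Finsupp.equivFunOnFinite.symm β)
          (coeff (α + Finsupp.equivFunOnFinite.symm β) f))

/-- Product of monomials is the monomial of the sums. -/
lemma monomial_prod' {ι : Type*} (s : Finset ι) (d : ι → Fin n →₀ ℕ) (c : ι → F) :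
    ∏ i ∈ s, (monomial (d i) (c i) : MvPolynomial (Fin n) F) =
      monomial (∑ i ∈ s, d i) (∏ i ∈ s, c i) := by
  classical
  induction s using Finset.induction with
  | empty => simp
  | @insert _ _ h ih =>
      rw [Finset.prod_insert h, Finset.sum_insert h, Finset.prod_insert h, ih, monomial_mul]

/-- Key counting lemma: a sum over `k`-tuples of indices equals the multinomial-weighted
sum over the antidiagonal. -/
lemma key_sum {M : Type*} [AddCommMonoid M] [Module F M] (a : Fin n → F) (k : ℕ)
    (G : (Fin n →₀ ℕ) → M) :
    ∑ j : Fin k → Fin n, (∏ i, a (j i)) • G (∑ i, Finsupp.single (j i) 1) =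
      ∑ β ∈ Finset.Nat.antidiagonalTuple n k,
        ((Nat.multinomial Finset.univ β : F) * ∏ i, a i ^ β i) •
          G (Finsupp.equivFunOnFinite.symm β) := by
  classical
  set φ : MvPolynomial (Fin n) F →ₗ[F] M := (basisMonomials (Fin n) F).constr ℕ G with hφ
  have hφm : ∀ (d : Fin n →₀ ℕ) (c : F), φ (monomial d c) = c • G d := by
    intro d c
    have h1 : (monomial d c : MvPolynomial (Fin n) F) = c • monomial d 1 := by
      rw [smul_monomial, smul_eq_mul, mul_one]
    have h2 : (monomial d 1 : MvPolynomial (Fin n) F) = basisMonomials (Fin n) F d := by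
      rw [coe_basisMonomials]
    rw [h1, map_smul, h2, hφ, Module.Basis.constr_basis]
  have e1 : ((∑ i, C (a i) * X i : MvPolynomial (Fin n) F)) ^ k =
      ∑ j : Fin k → Fin n,
        monomial (∑ i, Finsupp.single (j i) 1) (∏ i, a (j i)) := by
    rw [Finset.sum_pow', Fintype.piFinset_univ]
    refine Finset.sum_congr rfl fun j _ => ?_
    rw [show (∏ i, (C (a (j i)) * X (j i)) : MvPolynomial (Fin n) F) =
        ∏ i, monomial (Finsupp.single (j i) 1) (a (j i)) by
      refine Finset.prod_congr rfl fun i _ => ?_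
      exact C_mul_X_eq_monomial]
    rw [monomial_prod']
  have e2 : ((∑ i, C (a i) * X i : MvPolynomial (Fin n) F)) ^ k =
      ∑ β ∈ Finset.Nat.antidiagonalTuple n k,
        monomial (Finsupp.equivFunOnFinite.symm β)
          ((Nat.multinomial Finset.univ β : F) * ∏ i, a i ^ β i) := by
    rw [Finset.sum_pow_eq_sum_piAntidiag, Finset.piAntidiag_univ_fin_eq_antidiagonalTuple]
    refine Finset.sum_congr rfl fun β _ => ?_
    have h3 : (∏ i, (C (a i) * X i) ^ β i : MvPolynomial (Fin n) F) =
        monomial (Finsupp.equivFunOnFinite.symm β) (∏ i, a i ^ β i) := by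
      rw [show (∏ i, (C (a i) * X i) ^ β i : MvPolynomial (Fin n) F) =
          ∏ i, monomial (Finsupp.single i (β i)) (a i ^ β i) by
        refine Finset.prod_congr rfl fun i _ => ?_
        rw [mul_pow, ← C_pow, C_mul_X_pow_eq_monomial]]
      rw [monomial_prod', ← Finsupp.equivFunOnFinite_symm_eq_sum]
    rw [h3, ← C_eq_coe_nat, C_mul_monomial]
  have := congrArg φ (e1.symm.trans e2)
  rw [map_sum, map_sum] at this
  simp only [hφm] at this
  exact this

lemma pderiv_comm' (i j : Fin n) (p : MvPolynomial (Fin n) F) :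
    pderiv i (pderiv j p) = pderiv j (pderiv i p) := by
  induction p using MvPolynomial.induction_on' with
  | add p q hp hq => simp [hp, hq]
  | monomial s c =>
      simp only [pderiv_monomial]
      rw [tsub_tsub, tsub_tsub, add_comm (Finsupp.single j 1)]
      congr 1
      rcases eq_or_ne i j with rfl | hij
      · ring
      · rw [Finsupp.tsub_apply, Finsupp.tsub_apply, Finsupp.single_apply, Finsupp.single_apply,
          if_neg hij, if_neg (Ne.symm hij)]
        simp only [Nat.sub_zero]
        ring

lemma commute_pderiv (i j : Fin n) :
    Commute ((pderiv i).toLinearMap : Module.End F (MvPolynomial (Fin n) F))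
      ((pderiv j).toLinearMap) := by
  refine LinearMap.ext fun p => ?_
  exact pderiv_comm' i j p

lemma list_prod_pow_add {M : Type*} [Monoid M] (A : Fin n → M)
    (hA : ∀ i j, Commute (A i) (A j)) (β γ : Fin n → ℕ) (l : List (Fin n)) :
    (l.map fun i => A i ^ (β i + γ i)).prod =
      (l.map fun i => A i ^ β i).prod * (l.map fun i => A i ^ γ i).prod := by
  induction l with
  | nil => simp
  | cons a t ih =>
      rw [List.map_cons, List.map_cons, List.map_cons, List.prod_cons, List.prod_cons,
        List.prod_cons, ih, pow_add]
      have hc : Commute (A a ^ γ a) ((t.map fun i => A i ^ β i).prod) := by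
        refine Commute.list_prod_right _ _ fun x hx => ?_
        obtain ⟨i, _, rfl⟩ := List.mem_map.1 hx
        exact (hA a i).pow_pow _ _
      rw [mul_assoc, mul_assoc, ← mul_assoc (A a ^ γ a), hc.eq, mul_assoc]

lemma pdPow_add (β γ : Fin n →₀ ℕ) :
    (pdPow (β + γ) : Module.End F (MvPolynomial (Fin n) F)) = pdPow β * pdPow γ := by
  unfold pdPow
  have : ∀ i : Fin n, (β + γ) i = β i + γ i := fun i => Finsupp.add_apply β γ i
  simp only [this]
  exact list_prod_pow_add _ (fun i j => commute_pderiv i j) _ _ _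

/-- Part (1) without the positivity assumption. -/
lemma Dk_eq_tuple_sum (f : MvPolynomial (Fin n) F) (a : Fin n → F)
    (α : Fin n →₀ ℕ) (k : ℕ) :
    Dk a α k f =
      ∑ j : Fin k → Fin n,
        (∏ i, a (j i)) •
          pdPow (∑ i, Finsupp.single (j i) 1)
            (monomial (α + ∑ i, Finsupp.single (j i) 1)
              (coeff (α + ∑ i, Finsupp.single (j i) 1) f)) :=
  (key_sum a k fun β => pdPow β (monomial (α + β) (coeff (α + β) f))).symm

theorem Dk_unitVector_sum_and_rec (f : MvPolynomial (Fin n) F) (a : Fin n → F)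
    (α : Fin n →₀ ℕ) (k ℓ : ℕ) (hk : 1 ≤ k) (hℓ : 1 ≤ ℓ) :
    (Dk a α k f =
      ∑ j : Fin k → Fin n,
        (∏ i, a (j i)) •
          pdPow (∑ i, Finsupp.single (j i) 1)
            (monomial (α + ∑ i, Finsupp.single (j i) 1)
              (coeff (α + ∑ i, Finsupp.single (j i) 1) f))) ∧
    (Dk a α (k + ℓ) f =
      ∑ β ∈ Finset.Nat.antidiagonalTuple n ℓ,
        ((Nat.multinomial Finset.univ β : F) * ∏ i, a i ^ β i) •
          pdPow (Finsupp.equivFunOnFinite.symm β)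
            (Dk a (α + Finsupp.equivFunOnFinite.symm β) k f)) := by
  refine ⟨Dk_eq_tuple_sum f a α k, ?_⟩
  -- rewrite the RHS as a tuple sum over Fin ℓ using `key_sum`
  rw [← key_sum a ℓ (fun β => pdPow β (Dk a (α + β) k f))]
  -- expand the inner Dk
  have hrhs : ∀ j' : Fin ℓ → Fin n,
      (∏ i, a (j' i)) •
        pdPow (∑ i, Finsupp.single (j' i) 1)
          (Dk a (α + ∑ i, Finsupp.single (j' i) 1) k f) =
      ∑ j : Fin k → Fin n,
        ((∏ i, a (j' i)) * ∏ i, a (j i)) •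
          pdPow ((∑ i, Finsupp.single (j' i) 1) + ∑ i, Finsupp.single (j i) 1)
            (monomial (α + ((∑ i, Finsupp.single (j' i) 1) + ∑ i, Finsupp.single (j i) 1))
              (coeff (α + ((∑ i, Finsupp.single (j' i) 1) + ∑ i, Finsupp.single (j i) 1)) f)) := by
    intro j'
    rw [Dk_eq_tuple_sum, map_sum, Finset.smul_sum]
    refine Finset.sum_congr rfl fun j _ => ?_
    rw [map_smul, smul_smul, pdPow_add, Module.End.mul_apply, add_assoc]
  simp only [hrhs]
  -- now both sides are double sums; reindex the LHS
  rw [Dk_eq_tuple_sum]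
  rw [Finset.sum_comm, ← Fintype.sum_prod_type']
  refine Fintype.sum_equiv
    ((finSumFinEquiv.symm.arrowCongr (Equiv.refl (Fin n))).trans
      (Equiv.sumArrowEquivProdArrow (Fin k) (Fin ℓ) (Fin n))) _ _ ?_
  intro J
  have h1 : (∏ i, a (J i)) =
      (∏ i : Fin k, a (J (finSumFinEquiv (Sum.inl i)))) *
        ∏ i : Fin ℓ, a (J (finSumFinEquiv (Sum.inr i))) := by
    calc ∏ i : Fin (k + ℓ), a (J i)
        = ∏ s : Fin k ⊕ Fin ℓ, a (J (finSumFinEquiv s)) :=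
          (Fintype.prod_equiv finSumFinEquiv _ _ fun s => rfl).symm
      _ = _ := Fintype.prod_sum_type _
  have h2 : (∑ i, Finsupp.single (J i) 1) =
      (∑ i : Fin k, Finsupp.single (J (finSumFinEquiv (Sum.inl i))) 1) +
        ∑ i : Fin ℓ, Finsupp.single (J (finSumFinEquiv (Sum.inr i))) 1 := by
    calc (∑ i : Fin (k + ℓ), Finsupp.single (J i) 1)
        = ∑ s : Fin k ⊕ Fin ℓ, Finsupp.single (J (finSumFinEquiv s)) 1 :=
          (Fintype.sum_equiv finSumFinEquiv _ _ fun s => rfl).symm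
      _ = _ := Fintype.sum_sum_type _
  simp only [Equiv.trans_apply, Equiv.arrowCongr_apply, Equiv.sumArrowEquivProdArrow,
    Equiv.coe_fn_mk, Equiv.coe_refl, Function.comp, Equiv.symm_symm, id_eq]
  rw [h1, h2, mul_comm (∏ i : Fin k, a (J (finSumFinEquiv (Sum.inl i)))),
    add_comm (∑ i : Fin k, Finsupp.single (J (finSumFinEquiv (Sum.inl i))) 1)]

end
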